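/- Let h: ℝ^n → ℝ^m be C² on a convex neighborhood of a segment [θ, θ+s] with second-order Taylor bound ‖h(θ+s) - h(θ) - J_h(θ)s‖₁ ≤ (L/2)‖s‖². Suppose the update is θ' = θ - η D G - η D e where J_h(θ) D G = κ h(θ), 0 ≤ κη ≤ 1, ‖J_h(θ)‖_{2→1} ≤ J₁, and ‖D‖ ≤ 1/δ. Then ‖h(θ')‖₁ ≤ (1 - κη)‖h(θ)‖₁ + (ηJ₁/δ)‖e‖ + (L/2)‖θ' - θ‖². -/
import Mathlib


open Matrix

/-- One-step constraint-violation contraction: if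
`θ' = θ - η D G - η D e` with `J D G = κ h(θ)`, `0 ≤ κη ≤ 1`,
`‖J‖_{2→1} ≤ J₁`, `‖D‖ ≤ 1/δ`, and a second-order ℓ¹ Taylor bound holds, then
`‖h(θ')‖₁ ≤ (1-κη)‖h(θ)‖₁ + (ηJ₁/δ)‖e‖ + (L/2)‖θ'-θ‖²`. -/
theorem constraint_violation_contraction
    (m n : ℕ) (h : (Fin n → ℝ) → Fin m → ℝ)
    (J : Matrix (Fin m) (Fin n) ℝ) (D : Matrix (Fin n) (Fin n) ℝ)
    (θ θ' Gv e : Fin n → ℝ) (η κ L J₁ δ : ℝ)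
    (hη : 0 ≤ η) (hδ : 0 < δ) (hL : 0 ≤ L)
    (hTaylor : ∑ i, |h θ' i - h θ i - (J *ᵥ (θ' - θ)) i|
        ≤ L / 2 * ∑ j, (θ' j - θ j) ^ 2)
    (hupdate : θ' = θ - η • (D *ᵥ Gv) - η • (D *ᵥ e))
    (hFL : J *ᵥ (D *ᵥ Gv) = κ • h θ)
    (hκη0 : 0 ≤ κ * η) (hκη1 : κ * η ≤ 1)
    (hJ1 : ∀ x : Fin n → ℝ,
      ∑ i, |(J *ᵥ x) i| ≤ J₁ * Real.sqrt (∑ j, (x j) ^ 2))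
    (hD : ∀ x : Fin n → ℝ,
      Real.sqrt (∑ j, ((D *ᵥ x) j) ^ 2) ≤ (1 / δ) * Real.sqrt (∑ j, (x j) ^ 2)) :
    ∑ i, |h θ' i|
      ≤ (1 - κ * η) * ∑ i, |h θ i|
        + η * J₁ / δ * Real.sqrt (∑ j, (e j) ^ 2)
        + L / 2 * ∑ j, (θ' j - θ j) ^ 2 := by
  have hs : θ' - θ = (-η) • (D *ᵥ Gv) + (-η) • (D *ᵥ e) := by
    rw [hupdate]; module
  have hJs : J *ᵥ (θ' - θ) = (-(κ * η)) • h θ + (-η) • (J *ᵥ (D *ᵥ e)) := by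
    rw [hs, mulVec_add, mulVec_smul, mulVec_smul, hFL]; module
  -- bound on the error term
  have hJDe : ∑ i, |(J *ᵥ (D *ᵥ e)) i| ≤ J₁ / δ * Real.sqrt (∑ j, (e j) ^ 2) := by
    have h1 := hJ1 (D *ᵥ e)
    have h2 := hD e
    rcases Nat.eq_zero_or_pos n with hn | hn
    · have he0 : ∀ j, e j = 0 := fun j => absurd j.2 (by omega)
      have hDe0 : (D *ᵥ e) = 0 := by
        ext j; exact absurd j.2 (by omega)
      have : ∑ j, (e j) ^ 2 = 0 := by
        apply Finset.sum_eq_zero; intro j _; rw [he0 j]; ring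
      rw [this, Real.sqrt_zero, mul_zero]
      have : Real.sqrt (∑ j, ((D *ᵥ e) j) ^ 2) = 0 := by
        rw [hDe0]; simp
      calc ∑ i, |(J *ᵥ (D *ᵥ e)) i| ≤ J₁ * Real.sqrt (∑ j, ((D *ᵥ e) j) ^ 2) := h1
        _ = 0 := by rw [this, mul_zero]
    · have hJ₁0 : 0 ≤ J₁ := by
        have hx := hJ1 (fun _ => 1)
        have hsum : (∑ j : Fin n, ((1:ℝ)) ^ 2) = (n : ℝ) := by simp
        have hpos : 0 < Real.sqrt (∑ j : Fin n, ((1:ℝ)) ^ 2) := by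
          rw [hsum]; positivity
        have h0 : (0:ℝ) ≤ ∑ i, |(J *ᵥ (fun _ => 1)) i| :=
          Finset.sum_nonneg fun i _ => abs_nonneg _
        nlinarith [hx]
      calc ∑ i, |(J *ᵥ (D *ᵥ e)) i|
          ≤ J₁ * Real.sqrt (∑ j, ((D *ᵥ e) j) ^ 2) := h1
        _ ≤ J₁ * ((1 / δ) * Real.sqrt (∑ j, (e j) ^ 2)) :=
            mul_le_mul_of_nonneg_left h2 hJ₁0
        _ = J₁ / δ * Real.sqrt (∑ j, (e j) ^ 2) := by ring
  set E : Fin m → ℝ := fun i => h θ' i - h θ i - (J *ᵥ (θ' - θ)) i with hE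
  have hpt : ∀ i, |h θ' i| ≤ |E i|
      + (1 - κ * η) * |h θ i| + η * |(J *ᵥ (D *ᵥ e)) i| := by
    intro i
    have hd : h θ' i = E i
        + (1 - κ * η) * h θ i + (-η) * (J *ᵥ (D *ᵥ e)) i := by
      have := congrFun hJs i
      simp only [Pi.add_apply, Pi.smul_apply, smul_eq_mul] at this
      simp only [hE]
      rw [show (J *ᵥ (θ' - θ)) i = -(κ * η) * h θ i + -η * (J *ᵥ (D *ᵥ e)) i from this]
      ring
    rw [hd]
    calc |E i
        + (1 - κ * η) * h θ i + (-η) * (J *ᵥ (D *ᵥ e)) i|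
        ≤ |E i|
          + |(1 - κ * η) * h θ i| + |(-η) * (J *ᵥ (D *ᵥ e)) i| :=
          (abs_add_le _ _).trans (by gcongr; exact abs_add_le _ _)
      _ = |E i|
          + (1 - κ * η) * |h θ i| + η * |(J *ᵥ (D *ᵥ e)) i| := by
          rw [abs_mul, abs_mul, abs_of_nonneg (by linarith : (0:ℝ) ≤ 1 - κ * η),
            abs_neg, abs_of_nonneg hη]
  calc ∑ i, |h θ' i|
      ≤ ∑ i, (|E i|
          + (1 - κ * η) * |h θ i| + η * |(J *ᵥ (D *ᵥ e)) i|) :=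
        Finset.sum_le_sum fun i _ => hpt i
    _ = (∑ i, |E i|)
        + (1 - κ * η) * (∑ i, |h θ i|) + η * ∑ i, |(J *ᵥ (D *ᵥ e)) i| := by
        rw [Finset.sum_add_distrib, Finset.sum_add_distrib,
          ← Finset.mul_sum, ← Finset.mul_sum]
    _ ≤ L / 2 * (∑ j, (θ' j - θ j) ^ 2)
        + (1 - κ * η) * (∑ i, |h θ i|)
        + η * (J₁ / δ * Real.sqrt (∑ j, (e j) ^ 2)) := by
        gcongr
    _ = (1 - κ * η) * ∑ i, |h θ i|
        + η * J₁ / δ * Real.sqrt (∑ j, (e j) ^ 2)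
        + L / 2 * ∑ j, (θ' j - θ j) ^ 2 := by ring
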